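/- arXiv:1112.2068 — 7 statements merged into one kernel-verified Lean document; each statement's English description precedes it below -/
import Mathlib

section
/- Let G₁, G₂ be graphs and S ⊆ V₁ × V₂ a vertex subset of the Cartesian product G₁ □ G₂. If the projection of S onto V₁ is a defensive k₁-alliance free set in G₁, then S is a defensive (k₁ + Δ₂)-alliance free set in G₁ □ G₂, where Δ₂ is the maximum degree of G₂. -/
open Classical

/-- Number of neighbors of `v` inside `S`. -/
noncomputable def dS {V : Type*} (G : SimpleGraph V) (S : Set V) (v : V) : ℕ :=
  {u ∈ S | G.Adj v u}.ncard

/-- `S` is a defensive `k`-alliance. -/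
def IsDefAlliance {V : Type*} (G : SimpleGraph V) (k : ℤ) (S : Set V) : Prop :=
  S.Nonempty ∧ ∀ v ∈ S, (dS G S v : ℤ) ≥ (dS G Sᶜ v : ℤ) + k

/-- `X` is a defensive `k`-alliance free set. -/
def IsDafFree {V : Type*} (G : SimpleGraph V) (k : ℤ) (X : Set V) : Prop :=
  ∀ S : Set V, S ⊆ X → ¬ IsDefAlliance G k S

/-- Boundary: vertices outside `S` with a neighbor in `S`. -/
def obdry {V : Type*} (G : SimpleGraph V) (S : Set V) : Set V :=
  {v | v ∉ S ∧ ∃ u ∈ S, G.Adj v u}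

/-- `S` is an offensive `k`-alliance. -/
def IsOffAlliance {V : Type*} (G : SimpleGraph V) (k : ℤ) (S : Set V) : Prop :=
  S.Nonempty ∧ ∀ v ∈ obdry G S, (dS G S v : ℤ) ≥ (dS G Sᶜ v : ℤ) + k

/-- `X` is an offensive `k`-alliance free set. -/
def IsOafFree {V : Type*} (G : SimpleGraph V) (k : ℤ) (X : Set V) : Prop :=
  ∀ S : Set V, S ⊆ X → ¬ IsOffAlliance G k S

/-- `S` is a powerful `k`-alliance. -/
def IsPowAlliance {V : Type*} (G : SimpleGraph V) (k : ℤ) (S : Set V) : Prop :=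
  IsDefAlliance G k S ∧ IsOffAlliance G (k + 2) S

/-- `X` is a powerful `k`-alliance free set. -/
def IsPafFree {V : Type*} (G : SimpleGraph V) (k : ℤ) (X : Set V) : Prop :=
  ∀ S : Set V, S ⊆ X → ¬ IsPowAlliance G k S

/-- Maximum cardinality of a defensive `k`-alliance free set. -/
noncomputable def phiD {V : Type*} (G : SimpleGraph V) (k : ℤ) : ℕ :=
  sSup {n : ℕ | ∃ X : Set V, IsDafFree G k X ∧ X.ncard = n}

/-- Maximum cardinality of an offensive `k`-alliance free set. -/
noncomputable def phiO {V : Type*} (G : SimpleGraph V) (k : ℤ) : ℕ :=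
  sSup {n : ℕ | ∃ X : Set V, IsOafFree G k X ∧ X.ncard = n}

/-- Maximum cardinality of a powerful `k`-alliance free set. -/
noncomputable def phiP {V : Type*} (G : SimpleGraph V) (k : ℤ) : ℕ :=
  sSup {n : ℕ | ∃ X : Set V, IsPafFree G k X ∧ X.ncard = n}

theorem stmt3 {V₁ V₂ : Type*} [Fintype V₁] [Fintype V₂]
    (G₁ : SimpleGraph V₁) (G₂ : SimpleGraph V₂) [DecidableRel G₂.Adj]
    (k₁ : ℤ) (S : Set (V₁ × V₂))
    (h : IsDafFree G₁ k₁ (Prod.fst '' S)) :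
    IsDafFree (G₁.boxProd G₂) (k₁ + (G₂.maxDegree : ℤ)) S := by
  rintro T hTS ⟨hne, hall⟩
  set W : Set V₁ := Prod.fst '' T with hW
  refine h W (Set.image_mono hTS) ⟨hne.image _, ?_⟩
  rintro a ⟨⟨a', b⟩, hT, rfl⟩
  dsimp only
  have key := hall (a', b) hT
  have h1 : dS (G₁.boxProd G₂) T (a', b) ≤ dS G₁ W a' + G₂.degree b := by
    have hsub : {u ∈ T | (G₁.boxProd G₂).Adj (a', b) u} ⊆
        ((fun c => (c, b)) '' {c ∈ W | G₁.Adj a' c}) ∪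
        ((fun d => (a', d)) '' (G₂.neighborSet b)) := by
      rintro ⟨c, d⟩ ⟨huT, hadj⟩
      rw [SimpleGraph.boxProd_adj] at hadj
      rcases hadj with ⟨hA, hE⟩ | ⟨hA, hE⟩
      · exact Or.inl ⟨c, ⟨⟨(c, d), huT, rfl⟩, hA⟩, by simp_all⟩
      · exact Or.inr ⟨d, hA, by simp_all⟩
    calc dS (G₁.boxProd G₂) T (a', b)
        ≤ (((fun c => (c, b)) '' {c ∈ W | G₁.Adj a' c}) ∪
            ((fun d => (a', d)) '' (G₂.neighborSet b))).ncard :=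
          Set.ncard_le_ncard hsub (Set.toFinite _)
      _ ≤ ((fun c => (c, b)) '' {c ∈ W | G₁.Adj a' c}).ncard +
            ((fun d => (a', d)) '' (G₂.neighborSet b)).ncard := Set.ncard_union_le _ _
      _ = dS G₁ W a' + G₂.degree b := by
          rw [Set.ncard_image_of_injective _ (fun x y hxy => by simpa using hxy),
            Set.ncard_image_of_injective _ (fun x y hxy => by simpa using hxy)]
          congr 1
          rw [← SimpleGraph.card_neighborSet_eq_degree, ← Nat.card_coe_set_eq,
            Nat.card_eq_fintype_card]
  have h2 : dS G₁ Wᶜ a' ≤ dS (G₁.boxProd G₂) Tᶜ (a', b) := by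
    have hsub : (fun c => (c, b)) '' {c ∈ Wᶜ | G₁.Adj a' c} ⊆
        {u ∈ Tᶜ | (G₁.boxProd G₂).Adj (a', b) u} := by
      rintro ⟨c, d⟩ ⟨c', ⟨hcW, hadj⟩, heq⟩
      obtain ⟨rfl, rfl⟩ : c' = c ∧ b = d := by simpa [Prod.ext_iff] using heq
      refine ⟨fun hmem => hcW ⟨(c', b), hmem, rfl⟩, ?_⟩
      rw [SimpleGraph.boxProd_adj]
      exact Or.inl ⟨hadj, rfl⟩
    calc dS G₁ Wᶜ a' = ((fun c => (c, b)) '' {c ∈ Wᶜ | G₁.Adj a' c}).ncard :=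
          (Set.ncard_image_of_injective _ (fun x y hxy => by simpa using hxy)).symm
      _ ≤ dS (G₁.boxProd G₂) Tᶜ (a', b) := Set.ncard_le_ncard hsub (Set.toFinite _)
  have h3 : G₂.degree b ≤ G₂.maxDegree := G₂.degree_le_maxDegree b
  have h1' : (dS (G₁.boxProd G₂) T (a', b) : ℤ) ≤ dS G₁ W a' + G₂.degree b := by
    exact_mod_cast h1
  have h2' : (dS G₁ Wᶜ a' : ℤ) ≤ dS (G₁.boxProd G₂) Tᶜ (a', b) := by exact_mod_cast h2
  have h3' : (G₂.degree b : ℤ) ≤ G₂.maxDegree := by exact_mod_cast h3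
  linarith
end

section
/- Let G₁, G₂ be graphs and S ⊆ V₁ × V₂. If the projection of S onto V₁ is a defensive k₁-alliance free set in G₁ and the projection of S onto V₂ is a defensive k₂-alliance free set in G₂, then S is a defensive (k₁ + k₂ − 1)-alliance free set in the Cartesian product G₁ □ G₂. -/
open Classical

section Aux

variable {V : Type*} [Fintype V]

lemma dS_mono (G : SimpleGraph V) {S S' : Set V} (h : S ⊆ S') (v : V) :
    dS G S v ≤ dS G S' v :=
  Set.ncard_le_ncard (fun u hu => ⟨h hu.1, hu.2⟩) (Set.toFinite _)

lemma dS_add_compl (G : SimpleGraph V) (S : Set V) (v : V) :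
    dS G S v + dS G Sᶜ v = dS G Set.univ v := by
  rw [dS, dS, dS, ← Set.ncard_union_eq ?_ (Set.toFinite _) (Set.toFinite _)]
  · congr 1; ext u; by_cases hu : u ∈ S <;> simp [hu]
  · rw [Set.disjoint_left]; rintro u ⟨h1, _⟩ ⟨h2, _⟩; exact h2 h1

end Aux

lemma dS_boxProd {V₁ V₂ : Type*} [Fintype V₁] [Fintype V₂]
    (G₁ : SimpleGraph V₁) (G₂ : SimpleGraph V₂) (U : Set (V₁ × V₂)) (a : V₁) (b : V₂) :
    dS (G₁.boxProd G₂) U (a, b) =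
      dS G₁ {a' | (a', b) ∈ U} a + dS G₂ {b' | (a, b') ∈ U} b := by
  have key : {u ∈ U | (G₁.boxProd G₂).Adj (a, b) u} =
      ((fun a' => (a', b)) '' {a' ∈ {a' | (a', b) ∈ U} | G₁.Adj a a'}) ∪
      ((fun b' => (a, b')) '' {b' ∈ {b' | (a, b') ∈ U} | G₂.Adj b b'}) := by
    ext ⟨x, y⟩
    simp only [Set.mem_setOf_eq, Set.mem_union, Set.mem_image, SimpleGraph.boxProd_adj,
      Prod.mk.injEq]
    constructor
    · rintro ⟨hU, (⟨hadj, heq⟩ | ⟨hadj, heq⟩)⟩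
      · exact Or.inl ⟨x, ⟨by rw [heq]; exact hU, hadj⟩, rfl, heq⟩
      · exact Or.inr ⟨y, ⟨by rw [heq]; exact hU, hadj⟩, heq, rfl⟩
    · rintro (⟨a', ⟨hU, hadj⟩, rfl, rfl⟩ | ⟨b', ⟨hU, hadj⟩, rfl, rfl⟩)
      · exact ⟨hU, Or.inl ⟨hadj, rfl⟩⟩
      · exact ⟨hU, Or.inr ⟨hadj, rfl⟩⟩
  rw [dS, key, Set.ncard_union_eq ?_ (Set.toFinite _) (Set.toFinite _),
    Set.ncard_image_of_injective _ (fun x y h => (Prod.mk.injEq ..).mp h |>.1),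
    Set.ncard_image_of_injective _ (fun x y h => (Prod.mk.injEq ..).mp h |>.2)]
  · rfl
  · rw [Set.disjoint_left]
    rintro ⟨x, y⟩ ⟨a', ⟨_, hadj⟩, heq⟩ ⟨b', ⟨_, hadj'⟩, heq'⟩
    injection heq with h1 h2
    injection heq' with h3 h4
    exact hadj.ne (h1.trans h3.symm).symm

theorem stmt4 {V₁ V₂ : Type*} [Fintype V₁] [Fintype V₂]
    (G₁ : SimpleGraph V₁) (G₂ : SimpleGraph V₂)
    (k₁ k₂ : ℤ) (S : Set (V₁ × V₂))
    (h₁ : IsDafFree G₁ k₁ (Prod.fst '' S))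
    (h₂ : IsDafFree G₂ k₂ (Prod.snd '' S)) :
    IsDafFree (G₁.boxProd G₂) (k₁ + k₂ - 1) S := by
  intro T hTS hT
  obtain ⟨hTne, hall⟩ := hT
  have hP₁ : (Prod.fst '' T) ⊆ Prod.fst '' S := Set.image_mono hTS
  have hnot := h₁ _ hP₁
  rw [IsDefAlliance] at hnot
  push_neg at hnot
  obtain ⟨a₀, ha₀, hfail⟩ := hnot (hTne.image _)
  obtain ⟨⟨a, b₁⟩, hab, rfl⟩ := ha₀
  simp only at hfail
  refine h₂ {b' | ((a, b₁).1, b') ∈ T} (fun b hb => ⟨((a, b₁).1, b), hTS hb, rfl⟩)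
    ⟨⟨b₁, hab⟩, fun b hb => ?_⟩
  simp only at hb ⊢
  have hball := hall (a, b) hb
  have hsplit := dS_boxProd G₁ G₂ T a b
  have hsplitc := dS_boxProd G₁ G₂ Tᶜ a b
  have e3 := dS_add_compl G₁ {a' | (a', b) ∈ T} a
  have e4 := dS_add_compl G₂ {b' | (a, b') ∈ T} b
  have hcompl1 : {a' | (a', b) ∈ Tᶜ} = {a' | (a', b) ∈ T}ᶜ := rfl
  have hcompl2 : {b' | (a, b') ∈ Tᶜ} = {b' | (a, b') ∈ T}ᶜ := rfl
  rw [hcompl1, hcompl2] at hsplitc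
  have hmono : dS G₁ {a' | (a', b) ∈ T} a ≤ dS G₁ (Prod.fst '' T) a :=
    dS_mono G₁ (fun a' ha' => Set.mem_image_of_mem Prod.fst (ha' : (a', b) ∈ T)) a
  have e2 := dS_add_compl G₁ (Prod.fst '' T) a
  have hmono' : dS G₁ (Prod.fst '' T)ᶜ a ≤ dS G₁ {a' | (a', b) ∈ T}ᶜ a := by omega
  have hkey : (dS G₁ {a' | (a', b) ∈ T} a : ℤ) + dS G₂ {b' | (a, b') ∈ T} b ≥
      (dS G₁ {a' | (a', b) ∈ T}ᶜ a : ℤ) + dS G₂ {b' | (a, b') ∈ T}ᶜ b + (k₁ + k₂ - 1) := by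
    rw [hsplit, hsplitc] at hball; push_cast at hball; linarith
  have m1 : (dS G₁ {a' | (a', b) ∈ T} a : ℤ) ≤ dS G₁ (Prod.fst '' T) a := by exact_mod_cast hmono
  have m2 : (dS G₁ (Prod.fst '' T)ᶜ a : ℤ) ≤ dS G₁ {a' | (a', b) ∈ T}ᶜ a := by
    exact_mod_cast hmono'
  have hgoal : (dS G₂ {b' | (a, b') ∈ T} b : ℤ) ≥ dS G₂ {b' | (a, b') ∈ T}ᶜ b + k₂ := by
    linarith
  exact hgoal
end

section
/- If T is a tree with maximum degree Δ ≥ 2, then for every k with 2 ≤ k ≤ Δ, the whole vertex set of T is a defensive k-alliance free set; equivalently, T contains no defensive k-alliance for k ≥ 2. -/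
open Classical

theorem no_min2 {V : Type*} [Fintype V] (T : SimpleGraph V)
    (hac : T.IsAcyclic) (S : Set V) (hS : S.Nonempty)
    (h2 : ∀ v ∈ S, 2 ≤ dS T S v) : False := by
  obtain ⟨v0, hv0⟩ := hS
  set P : Set ℕ := {n | ∃ (a b : V) (p : T.Walk a b), p.IsPath ∧ (∀ x ∈ p.support, x ∈ S) ∧ p.length = n} with hP
  have hne : P.Nonempty := ⟨0, v0, v0, SimpleGraph.Walk.nil, by simp, by simp [hv0], rfl⟩
  have hbdd : BddAbove P := by
    refine ⟨Fintype.card V, fun n hn => ?_⟩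
    obtain ⟨a, b, p, hp, -, hl⟩ := hn
    have := hp.length_lt
    omega
  have hM : sSup P ∈ P := Nat.sSup_mem hne hbdd
  obtain ⟨a, b, p, hp, hsupp, hl⟩ := hM
  -- a ∈ S
  have haS : a ∈ S := hsupp a p.start_mem_support
  -- a has two neighbors in S, pick one ≠ p.getVert 1
  have h2a : 2 ≤ ({u ∈ S | T.Adj a u}).ncard := h2 a haS
  have hfin : ({u ∈ S | T.Adj a u}).Finite := Set.toFinite _
  obtain ⟨c, hcmem, hcne⟩ := Set.exists_ne_of_one_lt_ncard (s := {u ∈ S | T.Adj a u}) (by omega) (p.getVert 1)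
  obtain ⟨hcS, hac'⟩ := hcmem
  by_cases hmem : c ∈ p.support
  · -- two distinct paths a → c
    have hq : (p.takeUntil c hmem).IsPath := hp.takeUntil hmem
    have he : (SimpleGraph.Walk.cons hac' SimpleGraph.Walk.nil : T.Walk a c).IsPath := by
      simp [SimpleGraph.Walk.isPath_iff_eq_nil, hac'.ne]
    have := hac.path_unique ⟨p.takeUntil c hmem, hq⟩ ⟨SimpleGraph.Walk.cons hac' SimpleGraph.Walk.nil, he⟩
    have heq : p.takeUntil c hmem = SimpleGraph.Walk.cons hac' SimpleGraph.Walk.nil :=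
      congrArg Subtype.val this
    have hspec := p.take_spec hmem
    rw [heq] at hspec
    have : p = SimpleGraph.Walk.cons hac' (p.dropUntil c hmem) := by
      simpa using hspec.symm
    apply hcne
    rw [this]
    simp [SimpleGraph.Walk.getVert_cons]
  · -- extend the path
    have hcons : (SimpleGraph.Walk.cons hac'.symm p).IsPath := hp.cons hmem
    have : p.length + 1 ∈ P := by
      refine ⟨c, b, SimpleGraph.Walk.cons hac'.symm p, hcons, ?_, by simp⟩
      intro x hx
      rw [SimpleGraph.Walk.support_cons] at hx
      rcases List.mem_cons.mp hx with h | h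
      · exact h ▸ hcS
      · exact hsupp x h
    have := le_csSup hbdd this
    omega

theorem stmt6 {V : Type*} [Fintype V] (T : SimpleGraph V) [DecidableRel T.Adj]
    (hT : T.IsTree) (hΔ : 2 ≤ T.maxDegree) (k : ℤ)
    (hk₁ : 2 ≤ k) (hk₂ : k ≤ (T.maxDegree : ℤ)) :
    IsDafFree T k (Set.univ : Set V) := by
  intro S hsub hS
  obtain ⟨hne, hall⟩ := hS
  refine no_min2 T hT.IsAcyclic S hne (fun v hv => ?_)
  have h := hall v hv
  have h0 : (0 : ℤ) ≤ (dS T Sᶜ v : ℤ) := Int.natCast_nonneg _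
  omega
end

section
/- Let G₁ be a graph, G₂ a graph with minimum degree δ₂, and S₁ ⊆ V₁. If S₁ × V₂ is a defensive k-alliance free set in G₁ □ G₂, then S₁ is a defensive (k − δ₂)-alliance free set in G₁. -/
open Classical

lemma dS_box_in {V₁ V₂ : Type*} [Fintype V₁] [Fintype V₂]
    (G₁ : SimpleGraph V₁) (G₂ : SimpleGraph V₂) [DecidableRel G₂.Adj]
    (S : Set V₁) (v : V₁) (hv : v ∈ S) (w : V₂) :
    dS (G₁.boxProd G₂) (S ×ˢ (Set.univ : Set V₂)) (v, w) = dS G₁ S v + G₂.degree w := by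
  have hset : {u ∈ S ×ˢ (Set.univ : Set V₂) | (G₁.boxProd G₂).Adj (v, w) u}
      = ((fun x => (x, w)) '' {u ∈ S | G₁.Adj v u}) ∪
        ((fun y => (v, y)) '' {y | G₂.Adj w y}) := by
    ext ⟨a, b⟩
    simp only [Set.mem_setOf_eq, Set.mem_prod, Set.mem_univ, and_true,
      SimpleGraph.boxProd_adj, Set.mem_union, Set.mem_image, Prod.mk.injEq]
    constructor
    · rintro ⟨ha, (⟨hadj, rfl⟩ | ⟨hadj, rfl⟩)⟩
      · exact Or.inl ⟨a, ⟨ha, hadj⟩, rfl, rfl⟩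
      · exact Or.inr ⟨b, hadj, rfl, rfl⟩
    · rintro (⟨x, ⟨hx, hadj⟩, rfl, rfl⟩ | ⟨y, hadj, rfl, rfl⟩)
      · exact ⟨hx, Or.inl ⟨hadj, rfl⟩⟩
      · exact ⟨hv, Or.inr ⟨hadj, rfl⟩⟩
  have hdisj : Disjoint ((fun x => (x, w)) '' {u ∈ S | G₁.Adj v u})
      ((fun y => (v, y)) '' {y | G₂.Adj w y}) := by
    rw [Set.disjoint_left]
    rintro ⟨a, b⟩ ⟨x, ⟨_, _⟩, rfl, rfl⟩ ⟨y, hy, _, rfl⟩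
    exact G₂.irrefl hy
  have h1 : ((fun x => (x, w)) '' {u ∈ S | G₁.Adj v u}).ncard = dS G₁ S v :=
    Set.ncard_image_of_injective _ (fun a b hab => (Prod.mk.injEq _ _ _ _ ▸ hab).1)
  have h2 : ((fun y => (v, y)) '' {y | G₂.Adj w y}).ncard = G₂.degree w := by
    rw [Set.ncard_image_of_injective _ (fun a b hab => (Prod.mk.injEq _ _ _ _ ▸ hab).2)]
    have : {y | G₂.Adj w y} = (G₂.neighborFinset w : Set V₂) := by
      ext y; simp [SimpleGraph.mem_neighborFinset]
    rw [this, Set.ncard_coe_finset, SimpleGraph.degree]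
  rw [dS, hset, Set.ncard_union_eq hdisj (Set.toFinite _) (Set.toFinite _), h1, h2]

lemma dS_box_out {V₁ V₂ : Type*} [Fintype V₁] [Fintype V₂]
    (G₁ : SimpleGraph V₁) (G₂ : SimpleGraph V₂)
    (S : Set V₁) (v : V₁) (hv : v ∈ S) (w : V₂) :
    dS (G₁.boxProd G₂) (S ×ˢ (Set.univ : Set V₂))ᶜ (v, w) = dS G₁ Sᶜ v := by
  have hset : {u ∈ (S ×ˢ (Set.univ : Set V₂))ᶜ | (G₁.boxProd G₂).Adj (v, w) u}
      = (fun x => (x, w)) '' {u ∈ Sᶜ | G₁.Adj v u} := by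
    ext ⟨a, b⟩
    simp only [Set.mem_setOf_eq, Set.mem_compl_iff, Set.mem_prod, Set.mem_univ, and_true,
      SimpleGraph.boxProd_adj, Set.mem_image, Prod.mk.injEq]
    constructor
    · rintro ⟨ha, (⟨hadj, rfl⟩ | ⟨hadj, rfl⟩)⟩
      · exact ⟨a, ⟨ha, hadj⟩, rfl, rfl⟩
      · exact absurd hv ha
    · rintro ⟨x, ⟨hx, hadj⟩, rfl, rfl⟩
      exact ⟨hx, Or.inl ⟨hadj, rfl⟩⟩
  rw [dS, hset,
    Set.ncard_image_of_injective _ (fun a b hab => (Prod.mk.injEq _ _ _ _ ▸ hab).1)]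
  rfl

theorem stmt11 {V₁ V₂ : Type*} [Fintype V₁] [Fintype V₂] [Nonempty V₂]
    (G₁ : SimpleGraph V₁) (G₂ : SimpleGraph V₂) [DecidableRel G₂.Adj]
    (k : ℤ) (S₁ : Set V₁)
    (h : IsDafFree (G₁.boxProd G₂) k (S₁ ×ˢ (Set.univ : Set V₂))) :
    IsDafFree G₁ (k - (G₂.minDegree : ℤ)) S₁ := by
  intro S hS ⟨hne, hall⟩
  refine h (S ×ˢ Set.univ) (Set.prod_mono hS le_rfl) ⟨?_, ?_⟩
  · obtain ⟨v, hv⟩ := hne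
    exact ⟨(v, Classical.arbitrary V₂), hv, Set.mem_univ _⟩
  · rintro ⟨v, w⟩ ⟨hv, -⟩
    rw [dS_box_in G₁ G₂ S v hv w, dS_box_out G₁ G₂ S v hv w]
    have h1 := hall v hv
    have h2 : (G₂.minDegree : ℤ) ≤ G₂.degree w :=
      Int.ofNat_le.mpr (G₂.minDegree_le_degree w)
    push_cast
    omega
end

section
/- Let G₁, G₂ be graphs and S ⊆ V₁ × V₂. If the projection of S onto V₁ is an offensive k-alliance free set in G₁, then S is an offensive (k − δ₂)-alliance free set in G₁ □ G₂, where δ₂ is the minimum degree of G₂. -/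
open Classical

private lemma dS_add_dS_compl {V : Type*} [Fintype V] (G : SimpleGraph V) (S : Set V) (v : V) :
    dS G S v + dS G Sᶜ v = (G.neighborSet v).ncard := by
  rw [dS, dS, ← Set.ncard_union_eq ?_ (Set.toFinite _) (Set.toFinite _)]
  · congr 1
    ext u
    by_cases hu : u ∈ S <;> simp [SimpleGraph.mem_neighborSet, hu]
  · rw [Set.disjoint_left]
    rintro u ⟨hu, _⟩ ⟨hu', _⟩
    exact hu' hu

private lemma ncard_boxProd_neighborSet {V₁ V₂ : Type*} [Fintype V₁] [Fintype V₂]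
    (G₁ : SimpleGraph V₁) (G₂ : SimpleGraph V₂) (x : V₁ × V₂) :
    ((G₁.boxProd G₂).neighborSet x).ncard
      = (G₁.neighborSet x.1).ncard + (G₂.neighborSet x.2).ncard := by
  rw [SimpleGraph.neighborSet_boxProd, Set.ncard_union_eq ?_]
  · rw [Set.prod_singleton, Set.singleton_prod,
      Set.ncard_image_of_injective _ (fun a₁ a₂ h => congrArg Prod.fst h),
      Set.ncard_image_of_injective _ (fun a₁ a₂ h => congrArg Prod.snd h)]
  · rw [Set.disjoint_left]
    rintro ⟨a, c⟩ ⟨ha, hc⟩ ⟨ha', hc'⟩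
    simp only [Set.mem_singleton_iff] at ha'
    exact G₁.irrefl (ha' ▸ ha)

theorem stmt13' {V₁ V₂ : Type*} [Fintype V₁] [Fintype V₂] [Nonempty V₂]
    (G₁ : SimpleGraph V₁) (G₂ : SimpleGraph V₂) [DecidableRel G₂.Adj]
    (k : ℤ) (S : Set (V₁ × V₂))
    (h : IsOafFree G₁ k (Prod.fst '' S)) :
    IsOafFree (G₁.boxProd G₂) (k - (G₂.minDegree : ℤ)) S := by
  intro T hTS hT
  obtain ⟨hTne, hTcond⟩ := hT
  refine h (Prod.fst '' T) (Set.image_mono hTS) ⟨hTne.image _, ?_⟩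
  intro v hv
  obtain ⟨hvnot, u, huT', hadj⟩ := hv
  obtain ⟨w, hwT, hwfst⟩ := huT'
  set b := w.2 with hb
  have hvbT : (v, b) ∉ T := fun hc => hvnot ⟨(v, b), hc, rfl⟩
  have hvb : (v, b) ∈ obdry (G₁.boxProd G₂) T := by
    refine ⟨hvbT, w, hwT, ?_⟩
    have hw : w = (w.1, w.2) := rfl
    rw [hw]
    exact SimpleGraph.boxProd_adj.2 (Or.inl ⟨hwfst ▸ hadj, rfl⟩)
  have hkey := hTcond _ hvb
  have h1 : dS (G₁.boxProd G₂) T (v, b) ≤ dS G₁ (Prod.fst '' T) v := by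
    rw [dS, dS]
    have hsub : {p ∈ T | (G₁.boxProd G₂).Adj (v, b) p}
        ⊆ (fun u => (u, b)) '' {u ∈ Prod.fst '' T | G₁.Adj v u} := by
      rintro ⟨p₁, p₂⟩ ⟨hpT, hpadj⟩
      rcases SimpleGraph.boxProd_adj.1 hpadj with ⟨ha, hbb⟩ | ⟨hadj2, heq⟩
      · exact ⟨p₁, ⟨⟨(p₁, p₂), hpT, rfl⟩, ha⟩, Prod.ext rfl hbb⟩
      · exact absurd ⟨(p₁, p₂), hpT, heq.symm⟩ hvnot
    calc {p ∈ T | (G₁.boxProd G₂).Adj (v, b) p}.ncard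
        ≤ ((fun u => (u, b)) '' {u ∈ Prod.fst '' T | G₁.Adj v u}).ncard :=
          Set.ncard_le_ncard hsub ((Set.toFinite _).image _)
      _ = {u ∈ Prod.fst '' T | G₁.Adj v u}.ncard :=
          Set.ncard_image_of_injective _ (fun a₁ a₂ hh => congrArg Prod.fst hh)
  have h2 : dS (G₁.boxProd G₂) T (v, b) + dS (G₁.boxProd G₂) Tᶜ (v, b)
      = (G₁.neighborSet v).ncard + (G₂.neighborSet b).ncard := by
    rw [dS_add_dS_compl, ncard_boxProd_neighborSet]
  have h3 : dS G₁ (Prod.fst '' T) v + dS G₁ (Prod.fst '' T)ᶜ v = (G₁.neighborSet v).ncard :=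
    dS_add_dS_compl G₁ _ v
  have h4 : G₂.minDegree ≤ (G₂.neighborSet b).ncard := by
    rw [Set.ncard_eq_toFinset_card', Set.toFinset_card, SimpleGraph.card_neighborSet_eq_degree]
    exact G₂.minDegree_le_degree b
  omega

theorem stmt13 {V₁ V₂ : Type*} [Fintype V₁] [Fintype V₂] [Nonempty V₂]
    (G₁ : SimpleGraph V₁) (G₂ : SimpleGraph V₂) [DecidableRel G₂.Adj]
    (k : ℤ) (S : Set (V₁ × V₂))
    (h : IsOafFree G₁ k (Prod.fst '' S)) :
    IsOafFree (G₁.boxProd G₂) (k - (G₂.minDegree : ℤ)) S := stmt13' G₁ G₂ k S h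
end

section
/- Let G₁ have order n₁ and G₂ have order n₂ and minimum degree δ₂. Then φ_k^o(G₁ □ G₂) ≥ n₂ · φ_{k+δ₂}^o(G₁), where φ_k^o(G) denotes the maximum cardinality of an offensive k-alliance free set in G. -/
open Classical

lemma ncard_prod_univ {V₁ V₂ : Type*} [Fintype V₁] [Fintype V₂] (X : Set V₁) :
    (X ×ˢ (Set.univ : Set V₂)).ncard = X.ncard * Fintype.card V₂ := by
  have h1 : (X ×ˢ (Set.univ : Set V₂)).ncard = Nat.card (X ×ˢ (Set.univ : Set V₂)) := rfl
  rw [h1, Nat.card_congr (Equiv.Set.prod X Set.univ), Nat.card_prod,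
    Nat.card_coe_set_eq, Nat.card_coe_set_eq, Set.ncard_univ, Nat.card_eq_fintype_card]

theorem stmt14 {V₁ V₂ : Type*} [Fintype V₁] [Fintype V₂] [Nonempty V₂]
    (G₁ : SimpleGraph V₁) (G₂ : SimpleGraph V₂) [DecidableRel G₂.Adj] (k : ℤ) :
    phiO (G₁.boxProd G₂) k ≥ Fintype.card V₂ * phiO G₁ (k + (G₂.minDegree : ℤ)) := by
  classical
  set δ : ℤ := (G₂.minDegree : ℤ)
  set A := {n : ℕ | ∃ X : Set V₁, IsOafFree G₁ (k + δ) X ∧ X.ncard = n} with hAdef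
  have hA0 : (0 : ℕ) ∈ A := by
    refine ⟨∅, ?_, Set.ncard_empty _⟩
    intro S hS hoff
    have : S = ∅ := Set.subset_empty_iff.mp hS
    exact hoff.1.ne_empty this
  have hAb : BddAbove A := by
    refine ⟨Fintype.card V₁, ?_⟩
    rintro n ⟨X, -, rfl⟩
    calc X.ncard ≤ (Set.univ : Set V₁).ncard :=
          Set.ncard_le_ncard (Set.subset_univ X) Set.finite_univ
      _ = Fintype.card V₁ := by simp [Set.ncard_univ, Nat.card_eq_fintype_card]
  obtain ⟨X, hXfree, hXcard⟩ : phiO G₁ (k + δ) ∈ A := Nat.sSup_mem ⟨0, hA0⟩ hAb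
  -- The candidate set in the product
  set W : Set (V₁ × V₂) := X ×ˢ (Set.univ : Set V₂) with hWdef
  have hWfree : IsOafFree (G₁.boxProd G₂) k W := by
    intro S hSW ⟨hSne, hall⟩
    -- project S to V₁
    set Y : Set V₁ := Prod.fst '' S with hYdef
    have hYX : Y ⊆ X := by
      rintro a ⟨p, hp, rfl⟩
      exact (hSW hp).1
    have hYne : Y.Nonempty := hSne.image _
    refine hXfree Y hYX ⟨hYne, ?_⟩
    rintro v ⟨hvY, u, huY, hvu⟩
    obtain ⟨⟨u', b⟩, hub, rfl⟩ := huY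
    have hvS : ∀ w : V₂, (v, w) ∉ S := by
      intro w hw
      exact hvY ⟨(v, w), hw, rfl⟩
    have hvb : (v, b) ∈ obdry (G₁.boxProd G₂) S := by
      refine ⟨hvS b, (u', b), hub, ?_⟩
      exact SimpleGraph.boxProd_adj.mpr (Or.inl ⟨hvu, rfl⟩)
    have hmain := hall (v, b) hvb
    -- upper bound on dS of S
    have hub1 : dS (G₁.boxProd G₂) S (v, b) ≤ dS G₁ Y v := by
      apply Set.ncard_le_ncard_of_injOn Prod.fst
      · rintro ⟨a, w⟩ ⟨hpS, hadj⟩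
        rcases SimpleGraph.boxProd_adj.mp hadj with ⟨h₁, h₂⟩ | ⟨h₁, h₂⟩
        · exact ⟨⟨(a, w), hpS, rfl⟩, h₁⟩
        · exact absurd hpS (by rw [show a = v from h₂.symm]; exact hvS w)
      · rintro ⟨a, w⟩ ⟨hpS, hadj⟩ ⟨a', w'⟩ ⟨hpS', hadj'⟩ h
        simp only at h
        rcases SimpleGraph.boxProd_adj.mp hadj with ⟨h₁, h₂⟩ | ⟨h₁, h₂⟩
        · rcases SimpleGraph.boxProd_adj.mp hadj' with ⟨h₁', h₂'⟩ | ⟨h₁', h₂'⟩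
          · exact Prod.ext h (h₂ ▸ h₂'.symm ▸ rfl)
          · exact absurd hpS' (by rw [show a' = v from h₂'.symm]; exact hvS w')
        · exact absurd hpS (by rw [show a = v from h₂.symm]; exact hvS w)
    -- lower bound on dS of Sᶜ
    have hlb1 : dS G₁ Yᶜ v + G₂.degree b ≤ dS (G₁.boxProd G₂) Sᶜ (v, b) := by
      set U1 : Set (V₁ × V₂) := (fun a => (a, b)) '' {a ∈ Yᶜ | G₁.Adj v a} with hU1
      set U2 : Set (V₁ × V₂) := (fun w => (v, w)) '' {w | G₂.Adj b w} with hU2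
      have hU1card : U1.ncard = dS G₁ Yᶜ v := by
        rw [hU1, Set.ncard_image_of_injective _ (fun a a' h => (Prod.mk.injEq _ _ _ _ ▸ h).1)]
        rfl
      have hU2card : U2.ncard = G₂.degree b := by
        rw [hU2, Set.ncard_image_of_injective _ (fun a a' h => (Prod.mk.injEq _ _ _ _ ▸ h).2)]
        have : {w | G₂.Adj b w} = G₂.neighborSet b := rfl
        rw [this, Set.ncard_eq_toFinset_card', Set.toFinset_card,
          SimpleGraph.card_neighborSet_eq_degree]
      have hdisj : Disjoint U1 U2 := by
        rw [Set.disjoint_left]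
        rintro p ⟨a, ⟨haY, hva⟩, rfl⟩ ⟨w, hw, hpw⟩
        have : a = v := (Prod.mk.injEq _ _ _ _ ▸ hpw.symm).1
        exact G₁.irrefl (this ▸ hva)
      have hsub : U1 ∪ U2 ⊆ {p ∈ Sᶜ | (G₁.boxProd G₂).Adj (v, b) p} := by
        rintro p (⟨a, ⟨haY, hva⟩, rfl⟩ | ⟨w, hw, rfl⟩)
        · refine ⟨fun hmem => haY ⟨(a, b), hmem, rfl⟩, ?_⟩
          exact SimpleGraph.boxProd_adj.mpr (Or.inl ⟨hva, rfl⟩)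
        · exact ⟨hvS w, SimpleGraph.boxProd_adj.mpr (Or.inr ⟨hw, rfl⟩)⟩
      calc dS G₁ Yᶜ v + G₂.degree b = U1.ncard + U2.ncard := by rw [hU1card, hU2card]
        _ = (U1 ∪ U2).ncard := (Set.ncard_union_eq hdisj (Set.toFinite _) (Set.toFinite _)).symm
        _ ≤ _ := Set.ncard_le_ncard hsub (Set.toFinite _)
    have hdeg : (G₂.minDegree : ℤ) ≤ (G₂.degree b : ℤ) := by
      exact_mod_cast G₂.minDegree_le_degree b
    have : (dS G₁ Y v : ℤ) ≥ (dS G₁ Yᶜ v : ℤ) + δ + k := by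
      have h1 : (dS (G₁.boxProd G₂) S (v, b) : ℤ) ≤ (dS G₁ Y v : ℤ) := by exact_mod_cast hub1
      have h2 : (dS G₁ Yᶜ v : ℤ) + (G₂.degree b : ℤ) ≤ (dS (G₁.boxProd G₂) Sᶜ (v, b) : ℤ) := by
        exact_mod_cast hlb1
      have := hmain
      simp only [δ]
      omega
    linarith
  have hWcard : W.ncard = X.ncard * Fintype.card V₂ := ncard_prod_univ X
  have hBb : BddAbove {n : ℕ | ∃ Z : Set (V₁ × V₂), IsOafFree (G₁.boxProd G₂) k Z ∧ Z.ncard = n} := by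
    refine ⟨Fintype.card (V₁ × V₂), ?_⟩
    rintro n ⟨Z, -, rfl⟩
    calc Z.ncard ≤ (Set.univ : Set (V₁ × V₂)).ncard :=
          Set.ncard_le_ncard (Set.subset_univ Z) Set.finite_univ
      _ = Fintype.card (V₁ × V₂) := by simp [Set.ncard_univ, Nat.card_eq_fintype_card]
  have hle : W.ncard ≤ phiO (G₁.boxProd G₂) k := le_csSup hBb ⟨W, hWfree, rfl⟩
  rw [hWcard, hXcard, Nat.mul_comm] at hle
  exact hle
end

section
/- Let G₁, G₂ be graphs and S ⊆ V₁ × V₂. If the projection of S onto V₁ is a powerful k₁-alliance free set in G₁, then S is a powerful (k₁ + Δ₂)-alliance free set in G₁ □ G₂, where Δ₂ is the maximum degree of G₂. -/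
open Classical

section Aux

set_option linter.unusedSectionVars false

variable {V₁ V₂ : Type*} [Fintype V₁] [Fintype V₂]
  (G₁ : SimpleGraph V₁) (G₂ : SimpleGraph V₂) [DecidableRel G₂.Adj]

private lemma inj_left (y : V₂) : Function.Injective (fun a : V₁ => (a, y)) := by
  intro a b hab; simpa using hab

private lemma inj_right (x : V₁) : Function.Injective (fun b : V₂ => (x, b)) := by
  intro a b hab; simpa using hab

/-- neighborSet ncard equals degree -/
private lemma ncard_nbr (y : V₂) : {b | G₂.Adj y b}.ncard = G₂.degree y := by
  have h : {b | G₂.Adj y b} = (G₂.neighborSet y) := rfl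
  rw [h, Set.ncard_eq_toFinset_card', SimpleGraph.degree]
  simp [SimpleGraph.neighborFinset]

-- Upper bound on dS in the box product.
private lemma dS_box_le (T : Set (V₁ × V₂)) (x : V₁) (y : V₂) :
    dS (G₁.boxProd G₂) T (x, y) ≤ dS G₁ (Prod.fst '' T) x + G₂.degree y := by
  set P := Prod.fst '' T with hP
  have hsub : {u ∈ T | (G₁.boxProd G₂).Adj (x, y) u} ⊆
      ((fun a : V₁ => (a, y)) '' {a ∈ P | G₁.Adj x a}) ∪
      ((fun b : V₂ => (x, b)) '' {b | G₂.Adj y b}) := by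
    rintro ⟨a, b⟩ ⟨hmem, hadj⟩
    simp only [SimpleGraph.boxProd_adj] at hadj
    rcases hadj with ⟨h1, h2⟩ | ⟨h1, h2⟩
    · subst h2
      exact Or.inl ⟨a, ⟨⟨(a, y), hmem, rfl⟩, h1⟩, rfl⟩
    · subst h2
      exact Or.inr ⟨b, h1, rfl⟩
  calc dS (G₁.boxProd G₂) T (x, y)
      ≤ (((fun a : V₁ => (a, y)) '' {a ∈ P | G₁.Adj x a}) ∪
        ((fun b : V₂ => (x, b)) '' {b | G₂.Adj y b})).ncard :=
        Set.ncard_le_ncard hsub (Set.toFinite _)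
    _ ≤ ((fun a : V₁ => (a, y)) '' {a ∈ P | G₁.Adj x a}).ncard +
        ((fun b : V₂ => (x, b)) '' {b | G₂.Adj y b}).ncard := Set.ncard_union_le _ _
    _ = dS G₁ P x + G₂.degree y := by
        rw [Set.ncard_image_of_injective _ (inj_left y),
          Set.ncard_image_of_injective _ (inj_right x), ncard_nbr]; rfl

-- Upper bound when x ∉ P.
private lemma dS_box_le' (T : Set (V₁ × V₂)) (x : V₁) (y : V₂)
    (hx : x ∉ Prod.fst '' T) :
    dS (G₁.boxProd G₂) T (x, y) ≤ dS G₁ (Prod.fst '' T) x := by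
  set P := Prod.fst '' T with hP
  have hsub : {u ∈ T | (G₁.boxProd G₂).Adj (x, y) u} ⊆
      (fun a : V₁ => (a, y)) '' {a ∈ P | G₁.Adj x a} := by
    rintro ⟨a, b⟩ ⟨hmem, hadj⟩
    simp only [SimpleGraph.boxProd_adj] at hadj
    rcases hadj with ⟨h1, h2⟩ | ⟨h1, h2⟩
    · subst h2
      exact ⟨a, ⟨⟨(a, y), hmem, rfl⟩, h1⟩, rfl⟩
    · subst h2
      exact absurd ⟨(x, b), hmem, rfl⟩ hx
  calc dS (G₁.boxProd G₂) T (x, y)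
      ≤ ((fun a : V₁ => (a, y)) '' {a ∈ P | G₁.Adj x a}).ncard :=
        Set.ncard_le_ncard hsub (Set.toFinite _)
    _ = dS G₁ P x := by rw [Set.ncard_image_of_injective _ (inj_left y)]; rfl

-- Lower bound on dS of complement.
private lemma dS_box_compl_ge (T : Set (V₁ × V₂)) (x : V₁) (y : V₂) :
    dS G₁ (Prod.fst '' T)ᶜ x ≤ dS (G₁.boxProd G₂) Tᶜ (x, y) := by
  set P := Prod.fst '' T with hP
  have hsub : (fun a : V₁ => (a, y)) '' {a ∈ Pᶜ | G₁.Adj x a} ⊆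
      {u ∈ Tᶜ | (G₁.boxProd G₂).Adj (x, y) u} := by
    rintro p hp
    rcases hp with ⟨c, ⟨hc1, hc2⟩, rfl⟩
    exact ⟨fun hmem => hc1 ⟨(c, y), hmem, rfl⟩, Or.inl ⟨hc2, rfl⟩⟩
  calc dS G₁ Pᶜ x = ((fun a : V₁ => (a, y)) '' {a ∈ Pᶜ | G₁.Adj x a}).ncard := by
        rw [Set.ncard_image_of_injective _ (inj_left y)]; rfl
    _ ≤ dS (G₁.boxProd G₂) Tᶜ (x, y) := Set.ncard_le_ncard hsub (Set.toFinite _)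

-- Stronger lower bound when x ∉ P.
private lemma dS_box_compl_ge' (T : Set (V₁ × V₂)) (x : V₁) (y : V₂)
    (hx : x ∉ Prod.fst '' T) :
    dS G₁ (Prod.fst '' T)ᶜ x + G₂.degree y ≤ dS (G₁.boxProd G₂) Tᶜ (x, y) := by
  set P := Prod.fst '' T with hP
  have hsub : ((fun a : V₁ => (a, y)) '' {a ∈ Pᶜ | G₁.Adj x a}) ∪
      ((fun b : V₂ => (x, b)) '' {b | G₂.Adj y b}) ⊆
      {u ∈ Tᶜ | (G₁.boxProd G₂).Adj (x, y) u} := by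
    rintro p (hp | hp)
    · rcases hp with ⟨c, ⟨hc1, hc2⟩, rfl⟩
      exact ⟨fun hmem => hc1 ⟨(c, y), hmem, rfl⟩, Or.inl ⟨hc2, rfl⟩⟩
    · rcases hp with ⟨c, hc1, rfl⟩
      exact ⟨fun hmem => hx ⟨(x, c), hmem, rfl⟩, Or.inr ⟨hc1, rfl⟩⟩
  have hdisj : Disjoint ((fun a : V₁ => (a, y)) '' {a ∈ Pᶜ | G₁.Adj x a})
      ((fun b : V₂ => (x, b)) '' {b | G₂.Adj y b}) := by
    rw [Set.disjoint_left]
    rintro p ⟨c, ⟨_, _⟩, rfl⟩ ⟨d, hd1, hd2⟩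
    obtain ⟨rfl, rfl⟩ : x = c ∧ d = y := by simpa using hd2
    exact G₂.loopless.irrefl _ hd1
  calc dS G₁ Pᶜ x + G₂.degree y
      = ((fun a : V₁ => (a, y)) '' {a ∈ Pᶜ | G₁.Adj x a}).ncard +
        ((fun b : V₂ => (x, b)) '' {b | G₂.Adj y b}).ncard := by
        rw [Set.ncard_image_of_injective _ (inj_left y),
          Set.ncard_image_of_injective _ (inj_right x), ncard_nbr]; rfl
    _ = (((fun a : V₁ => (a, y)) '' {a ∈ Pᶜ | G₁.Adj x a}) ∪
        ((fun b : V₂ => (x, b)) '' {b | G₂.Adj y b})).ncard :=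
        (Set.ncard_union_eq hdisj (Set.toFinite _) (Set.toFinite _)).symm
    _ ≤ dS (G₁.boxProd G₂) Tᶜ (x, y) := Set.ncard_le_ncard hsub (Set.toFinite _)

end Aux

theorem stmt17 {V₁ V₂ : Type*} [Fintype V₁] [Fintype V₂]
    (G₁ : SimpleGraph V₁) (G₂ : SimpleGraph V₂) [DecidableRel G₂.Adj]
    (k₁ : ℤ) (S : Set (V₁ × V₂))
    (h : IsPafFree G₁ k₁ (Prod.fst '' S)) :
    IsPafFree (G₁.boxProd G₂) (k₁ + (G₂.maxDegree : ℤ)) S := by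
  rintro T hTS ⟨⟨hTne, hdef⟩, ⟨-, hoff⟩⟩
  refine h (Prod.fst '' T) (Set.image_mono hTS) ⟨⟨hTne.image _, ?_⟩, ⟨hTne.image _, ?_⟩⟩
  · rintro x ⟨⟨x', y⟩, hxy, rfl⟩
    have h1 := dS_box_le G₁ G₂ T x' y
    have h2 := dS_box_compl_ge G₁ G₂ T x' y
    have h3 := hdef (x', y) hxy
    have hdeg : G₂.degree y ≤ G₂.maxDegree := G₂.degree_le_maxDegree y
    push_cast at *
    linarith
  · rintro x ⟨hxP, u, huP, hadj⟩
    obtain ⟨⟨u', y⟩, huy, rfl⟩ := huP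
    have hbd : (x, y) ∈ obdry (G₁.boxProd G₂) T := by
      refine ⟨fun hmem => hxP ⟨(x, y), hmem, rfl⟩, (u', y), huy, Or.inl ⟨hadj, rfl⟩⟩
    have h1 := dS_box_le' G₁ G₂ T x y hxP
    have h2 := dS_box_compl_ge' G₁ G₂ T x y hxP
    have h3 := hoff (x, y) hbd
    have hdeg : G₂.degree y ≤ G₂.maxDegree := G₂.degree_le_maxDegree y
    push_cast at *
    linarith
end
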